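/- Fix a positive integer β_max and a constant A > 0. There exists a constant C > 0, depending only on A and β_max, with the following property. Let U ⊆ ℝ² be open, let δ > 0 and η > 0, and let F, F₀: U → ℂ be β_max-times continuously differentiable functions such that for every κ ∈ U and every multi-index β ∈ ℕ² with |β| ≤ β_max: |F(κ)| ≤ 1/10 and |F₀(κ)| ≤ 1/10; |∂^β F(κ)| ≤ A δ^{−|β|} and |∂^β F₀(κ)| ≤ A δ^{−|β|}; and |∂^β (F − F₀)(κ)| ≤ η δ^{−|β|}. Then for every κ ∈ U and every multi-index β with |β| ≤ β_max, |∂^β ( (1 + F)^{1/2} − (1 + F₀)^{1/2} )(κ)| ≤ C η δ^{−|β|}, where z^{1/2} denotes the principal branch of the complex square root (well-defined since |F|, |F₀| ≤ 1/10, so 1 + F and 1 + F₀ avoid the negative real axis). -/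

import Mathlib

noncomputable section

open scoped Real

/-- The plane `ℝ²` with the Euclidean norm. -/
abbrev V2 : Type := EuclideanSpace ℝ (Fin 2)

/-- The vector `(a, b) ∈ ℝ²`. -/
def vec (a b : ℝ) : V2 := WithLp.toLp 2 ![a, b]

/-- The dot product on `ℝ²`. -/
def dot (a b : V2) : ℝ := a 0 * b 0 + a 1 * b 1

/-- `v₁ = (√3/2, 1/2)`. -/
def v1 : V2 := vec (Real.sqrt 3 / 2) (1 / 2)

/-- `v₂ = (√3/2, −1/2)`. -/
def v2 : V2 := vec (Real.sqrt 3 / 2) (-(1 / 2))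

/-- The lattice point `m₁ v₁ + m₂ v₂` of `Λ_h`. -/
def lat (m : ℤ × ℤ) : V2 := (m.1 : ℝ) • v1 + (m.2 : ℝ) • v2

/-- `k₁ = 2π(1/√3, 1)`. -/
def dk1 : V2 := vec (2 * π / Real.sqrt 3) (2 * π)

/-- `k₂ = 2π(1/√3, −1)`. -/
def dk2 : V2 := vec (2 * π / Real.sqrt 3) (-(2 * π))

/-- The dual lattice point `m₁ k₁ + m₂ k₂` of `Λ_h*`. -/
def dlat (m : ℤ × ℤ) : V2 := (m.1 : ℝ) • dk1 + (m.2 : ℝ) • dk2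

/-- `K = (0, 4π/3)`. -/
def KK : V2 := vec 0 (4 * π / 3)

/-- Clockwise rotation by `2π/3` about the origin (the matrix `R`). -/
def rotR (x : V2) : V2 :=
  vec (-(1/2) * x 0 + (Real.sqrt 3 / 2) * x 1) (-(Real.sqrt 3 / 2) * x 0 - (1/2) * x 1)

/-- The transpose `Rᵀ`. -/
def rotRT (x : V2) : V2 :=
  vec (-(1/2) * x 0 - (Real.sqrt 3 / 2) * x 1) ((Real.sqrt 3 / 2) * x 0 - (1/2) * x 1)

/-- Clockwise rotation by `π/3` about the origin (the matrix `R₆₀`). -/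
def rot60 (x : V2) : V2 :=
  vec ((1/2) * x 0 + (Real.sqrt 3 / 2) * x 1) (-(Real.sqrt 3 / 2) * x 0 + (1/2) * x 1)

/-- `e_{A,1} = (1/√3, 0)`. -/
def eA1 : V2 := vec (1 / Real.sqrt 3) 0

/-- `e_{A,ν} = R^{ν−1} e_{A,1}` for `ν = 1, 2, 3` (indexed by `Fin 3`). -/
def eA (ν : Fin 3) : V2 := rotR^[(ν : ℕ)] eA1

/-- `e_{B,ν} = −e_{A,ν}`. -/
def eB (ν : Fin 3) : V2 := -eA ν

/-- `e_{I,ν}` for `I ∈ {A, B}` (`true ↦ A`, `false ↦ B`). -/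
def eVec (I : Bool) (ν : Fin 3) : V2 := if I then eA ν else eB ν

/-- `γ(k) = Σ_{ν=1}^3 exp(i k·e_{B,ν})`. -/
def gam (k : V2) : ℂ := ∑ ν : Fin 3, Complex.exp (Complex.I * (dot k (eB ν)))

/-- `W_TB(k) = |γ(k)|`. -/
def Wtb (k : V2) : ℝ := ‖gam k‖

/-- `v_B = (1/√3, 0)`. -/
def vB : V2 := vec (1 / Real.sqrt 3) 0

/-- The hexagon center `x_c = (1/(2√3), −1/2)`. -/
def xc : V2 := vec (1 / (2 * Real.sqrt 3)) (-(1 / 2))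

/-- The rotation operator `ℛ[f](x) = f(x_c + Rᵀ(x − x_c))`. -/
def Rop (f : V2 → ℂ) (x : V2) : ℂ := f (xc + rotRT (x - xc))

/-- `τ = exp(2πi/3)`. -/
def tau : ℂ := Complex.exp (2 * (π : ℂ) * Complex.I / 3)

/-- The Euclidean norm of an integer pair. -/
def znorm (m : ℤ × ℤ) : ℝ := Real.sqrt ((m.1 : ℝ) ^ 2 + (m.2 : ℝ) ^ 2)

/-- `N_bad(w) = {m ∈ ℤ² : |w + m₁v₁ + m₂v₂| = 1/√3}`. -/
def Nbad (w : V2) : Set (ℤ × ℤ) := {m | ‖w + lat m‖ = 1 / Real.sqrt 3}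

/-- The `i`-th standard basis vector of `ℝ²`. -/
def basis2 (i : Fin 2) : V2 := EuclideanSpace.single i 1

/-- Partial derivative `∂_i f` of a complex-valued function on `ℝ²`. -/
def pd (i : Fin 2) (f : V2 → ℂ) : V2 → ℂ := fun x => fderiv ℝ f x (basis2 i)

/-- The Laplacian `Δf = ∂₁²f + ∂₂²f` of a complex-valued function on `ℝ²`. -/
def lap (f : V2 → ℂ) (x : V2) : ℂ :=
  ∑ i : Fin 2, fderiv ℝ (fun y => fderiv ℝ f y (basis2 i)) x (basis2 i)

/-- The radial profile of the fundamental solution of `−Δ + 1` on `ℝ²`: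
`𝒦(r) = (2π)⁻¹ e^{−r} ∫₀^∞ e^{−ζ} ζ^{−1/2} (2r + ζ)^{−1/2} dζ`. -/
def Kker (r : ℝ) : ℝ :=
  (2 * π)⁻¹ * Real.exp (-r) *
    ∫ ζ in Set.Ioi (0 : ℝ), Real.exp (-ζ) * ζ ^ (-(1/2 : ℝ)) * (2 * r + ζ) ^ (-(1/2 : ℝ))

/-- The iterated partial derivative `∂^β = ∂₁^{β₁} ∂₂^{β₂}` for a multi-index
`β ∈ ℕ²`, acting on complex-valued functions on `ℝ²`. -/
def mderiv (β : ℕ × ℕ) (f : V2 → ℂ) : V2 → ℂ := (pd 0)^[β.1] ((pd 1)^[β.2] f)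

section Helpers

open Filter

variable {U : Set V2}

lemma pd_congr {f g : V2 → ℂ} (hU : IsOpen U) (h : Set.EqOn f g U) (i : Fin 2) :
    Set.EqOn (pd i f) (pd i g) U := by
  intro x hx
  have hfg : f =ᶠ[nhds x] g := Filter.eventuallyEq_of_mem (hU.mem_nhds hx) h
  simp only [pd, hfg.fderiv_eq]

lemma pd_iter_congr {f g : V2 → ℂ} (hU : IsOpen U) (h : Set.EqOn f g U) (i : Fin 2) (t : ℕ) :
    Set.EqOn ((pd i)^[t] f) ((pd i)^[t] g) U := by
  induction t generalizing f g with
  | zero => exact h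
  | succ t ih =>
    rw [Function.iterate_succ_apply, Function.iterate_succ_apply]
    exact ih (pd_congr hU h i)

lemma mderiv_congr {f g : V2 → ℂ} (hU : IsOpen U) (h : Set.EqOn f g U) (β : ℕ × ℕ) :
    Set.EqOn (mderiv β f) (mderiv β g) U :=
  pd_iter_congr hU (pd_iter_congr hU h 1 β.2) 0 β.1

lemma pd_contDiffOn {f : V2 → ℂ} {m : ℕ} (hU : IsOpen U)
    (hf : ContDiffOn ℝ (m + 1 : ℕ) f U) (i : Fin 2) :
    ContDiffOn ℝ (m : ℕ) (pd i f) U := by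
  have h1 : ContDiffOn ℝ (m : ℕ) (fun x => fderivWithin ℝ f U x) U :=
    hf.fderivWithin hU.uniqueDiffOn (by norm_cast)
  have h2 : ContDiffOn ℝ (m : ℕ) (fun x => fderivWithin ℝ f U x (basis2 i)) U :=
    h1.clm_apply contDiffOn_const
  exact h2.congr fun x hx => by
    simp only [pd, fderivWithin_of_isOpen hU hx]

lemma pd_iter_contDiffOn {f : V2 → ℂ} {t k : ℕ} (hU : IsOpen U)
    (hf : ContDiffOn ℝ (t + k : ℕ) f U) (i : Fin 2) :
    ContDiffOn ℝ (t : ℕ) ((pd i)^[k] f) U := by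
  induction k generalizing f with
  | zero => exact hf
  | succ k ih =>
    rw [Function.iterate_succ_apply]
    exact ih (pd_contDiffOn (m := t + k) hU (by exact_mod_cast hf) i)

lemma diffAt_of_contDiffOn {f : V2 → ℂ} {m : ℕ} (hU : IsOpen U)
    (hf : ContDiffOn ℝ (m + 1 : ℕ) f U) {x : V2} (hx : x ∈ U) :
    DifferentiableAt ℝ f x :=
  ((hf.of_le (m := 1) (by exact_mod_cast Nat.succ_le_succ (Nat.zero_le m))).differentiableOn
    one_ne_zero).differentiableAt (hU.mem_nhds hx)

lemma pd_add {f g : V2 → ℂ} {x : V2} (hf : DifferentiableAt ℝ f x)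
    (hg : DifferentiableAt ℝ g x) (i : Fin 2) :
    pd i (fun y => f y + g y) x = pd i f x + pd i g x := by
  simp only [pd, fderiv_fun_add hf hg, ContinuousLinearMap.add_apply]

lemma pd_mul {f g : V2 → ℂ} {x : V2} (hf : DifferentiableAt ℝ f x)
    (hg : DifferentiableAt ℝ g x) (i : Fin 2) :
    pd i (fun y => f y * g y) x = pd i f x * g x + f x * pd i g x := by
  simp only [pd, fderiv_fun_mul hf hg, ContinuousLinearMap.add_apply,
    ContinuousLinearMap.smul_apply, smul_eq_mul]
  ring

lemma pd_const_mul {f : V2 → ℂ} {x : V2} (hf : DifferentiableAt ℝ f x) (c : ℂ) (i : Fin 2) :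
    pd i (fun y => c * f y) x = c * pd i f x := by
  simp only [pd, fderiv_const_mul hf c, ContinuousLinearMap.smul_apply, smul_eq_mul]

lemma pd_const_add (c : ℂ) (f : V2 → ℂ) (i : Fin 2) :
    pd i (fun x => c + f x) = pd i f := by
  funext x
  simp only [pd, fderiv_const_add]

end Helpers
section Helpers2

variable {U : Set V2}

lemma pd_iter_zero (i : Fin 2) (t : ℕ) :
    (pd i)^[t] (fun _ : V2 => (0 : ℂ)) = fun _ => (0 : ℂ) := by
  induction t with
  | zero => rfl
  | succ t ih =>
    rw [Function.iterate_succ_apply]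
    have : pd i (fun _ : V2 => (0 : ℂ)) = fun _ => (0 : ℂ) := by
      funext x
      simp [pd]
    rw [this, ih]

lemma pd_iter_add {t : ℕ} (hU : IsOpen U) {f g : V2 → ℂ}
    (hf : ContDiffOn ℝ (t : ℕ) f U) (hg : ContDiffOn ℝ (t : ℕ) g U) (i : Fin 2) :
    Set.EqOn ((pd i)^[t] (fun x => f x + g x))
      (fun x => (pd i)^[t] f x + (pd i)^[t] g x) U := by
  induction t generalizing f g with
  | zero => intro x hx; rfl
  | succ t ih =>
    intro x hx
    have hf' : ContDiffOn ℝ (t + 1 : ℕ) f U := hf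
    have hg' : ContDiffOn ℝ (t + 1 : ℕ) g U := hg
    have h1 : Set.EqOn (pd i (fun x => f x + g x)) (fun x => pd i f x + pd i g x) U :=
      fun y hy => pd_add (diffAt_of_contDiffOn hU hf' hy) (diffAt_of_contDiffOn hU hg' hy) i
    calc (pd i)^[t+1] (fun x => f x + g x) x
        = (pd i)^[t] (pd i (fun x => f x + g x)) x := by
          rw [Function.iterate_succ_apply]
      _ = (pd i)^[t] (fun x => pd i f x + pd i g x) x := pd_iter_congr hU h1 i t hx
      _ = (pd i)^[t] (pd i f) x + (pd i)^[t] (pd i g) x :=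
          ih (pd_contDiffOn hU hf' i) (pd_contDiffOn hU hg' i) hx
      _ = (pd i)^[t+1] f x + (pd i)^[t+1] g x := by
          rw [← Function.iterate_succ_apply, ← Function.iterate_succ_apply]

lemma pd_iter_const_mul {t : ℕ} (hU : IsOpen U) {f : V2 → ℂ}
    (hf : ContDiffOn ℝ (t : ℕ) f U) (c : ℂ) (i : Fin 2) :
    Set.EqOn ((pd i)^[t] (fun x => c * f x)) (fun x => c * (pd i)^[t] f x) U := by
  induction t generalizing f with
  | zero => intro x hx; rfl
  | succ t ih =>
    intro x hx
    have hf' : ContDiffOn ℝ (t + 1 : ℕ) f U := hf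
    have h1 : Set.EqOn (pd i (fun x => c * f x)) (fun x => c * pd i f x) U :=
      fun y hy => pd_const_mul (diffAt_of_contDiffOn hU hf' hy) c i
    calc (pd i)^[t+1] (fun x => c * f x) x
        = (pd i)^[t] (pd i (fun x => c * f x)) x := by
          rw [Function.iterate_succ_apply]
      _ = (pd i)^[t] (fun x => c * pd i f x) x := pd_iter_congr hU h1 i t hx
      _ = c * (pd i)^[t] (pd i f) x := ih (pd_contDiffOn hU hf' i) hx
      _ = c * (pd i)^[t+1] f x := by rw [← Function.iterate_succ_apply]

lemma pd_iter_sum {t : ℕ} (hU : IsOpen U) {s : Finset ℕ} {h : ℕ → V2 → ℂ}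
    (hh : ∀ a ∈ s, ContDiffOn ℝ (t : ℕ) (h a) U) (i : Fin 2) :
    Set.EqOn ((pd i)^[t] (fun x => ∑ a ∈ s, h a x))
      (fun x => ∑ a ∈ s, (pd i)^[t] (h a) x) U := by
  classical
  induction s using Finset.induction with
  | empty =>
    intro x hx
    simp [pd_iter_zero i t]
  | @insert a s ha ih =>
    intro x hx
    have hsum : (fun x => ∑ b ∈ insert a s, h b x)
        = fun x => h a x + ∑ b ∈ s, h b x := by
      funext y
      rw [Finset.sum_insert ha]
    have hcs : ContDiffOn ℝ (t : ℕ) (fun x => ∑ b ∈ s, h b x) U := by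
      apply ContDiffOn.sum
      intro b hb
      exact hh b (Finset.mem_insert_of_mem hb)
    rw [hsum]
    calc (pd i)^[t] (fun x => h a x + ∑ b ∈ s, h b x) x
        = (pd i)^[t] (h a) x + (pd i)^[t] (fun x => ∑ b ∈ s, h b x) x :=
          pd_iter_add hU (hh a (Finset.mem_insert_self a s)) hcs i hx
      _ = (pd i)^[t] (h a) x + ∑ b ∈ s, (pd i)^[t] (h b) x := by
          rw [ih (fun b hb => hh b (Finset.mem_insert_of_mem hb)) hx]
      _ = ∑ b ∈ insert a s, (pd i)^[t] (h b) x :=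
          (Finset.sum_insert (f := fun b => (pd i)^[t] (h b) x) ha).symm

lemma pascal_sum (a b : ℕ → ℂ) (t : ℕ) :
    ∑ j ∈ Finset.range (t + 1 + 1), ((t + 1).choose j : ℂ) * a j * b (t + 1 - j)
      = (∑ j ∈ Finset.range (t + 1), (t.choose j : ℂ) * a (j + 1) * b (t - j))
        + ∑ j ∈ Finset.range (t + 1), (t.choose j : ℂ) * a j * b (t - j + 1) := by
  have hb : ∑ j ∈ Finset.range (t + 1), (t.choose j : ℂ) * a j * b (t - j + 1)
      = ∑ j ∈ Finset.range (t + 1), (t.choose j : ℂ) * a j * b (t + 1 - j) := by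
    apply Finset.sum_congr rfl
    intro j hj
    have : t - j + 1 = t + 1 - j := by
      have := Finset.mem_range.mp hj
      omega
    rw [this]
  rw [hb]
  rw [Finset.sum_range_succ' _ (t + 1)]
  have h2 : ∀ j ∈ Finset.range (t + 1),
      ((t + 1).choose (j + 1) : ℂ) * a (j + 1) * b (t + 1 - (j + 1))
      = (t.choose j : ℂ) * a (j + 1) * b (t - j)
        + (t.choose (j + 1) : ℂ) * a (j + 1) * b (t - j) := by
    intro j hj
    rw [Nat.choose_succ_succ, Nat.succ_sub_succ]
    push_cast
    ring
  rw [Finset.sum_congr rfl h2, Finset.sum_add_distrib]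
  have h3 : ∑ j ∈ Finset.range (t + 1), (t.choose j : ℂ) * a j * b (t + 1 - j)
      = (∑ j ∈ Finset.range t, (t.choose (j + 1) : ℂ) * a (j + 1) * b (t - j))
        + (t.choose 0 : ℂ) * a 0 * b (t + 1) := by
    rw [Finset.sum_range_succ' _ t]
    congr 1
    apply Finset.sum_congr rfl
    intro j hj
    rw [Nat.succ_sub_succ]
  have h4 : ∑ j ∈ Finset.range (t + 1), (t.choose (j + 1) : ℂ) * a (j + 1) * b (t - j)
      = ∑ j ∈ Finset.range t, (t.choose (j + 1) : ℂ) * a (j + 1) * b (t - j) := by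
    rw [Finset.sum_range_succ]
    simp [Nat.choose_succ_self]
  rw [h3, h4]
  simp only [Nat.choose_zero_right, Nat.cast_one, one_mul, Nat.sub_zero]
  ring

lemma pd_iter_mul (hU : IsOpen U) {t : ℕ} {f g : V2 → ℂ}
    (hf : ContDiffOn ℝ (t : ℕ) f U) (hg : ContDiffOn ℝ (t : ℕ) g U) (i : Fin 2)
    {x : V2} (hx : x ∈ U) :
    (pd i)^[t] (fun y => f y * g y) x
      = ∑ j ∈ Finset.range (t + 1),
          (t.choose j : ℂ) * (pd i)^[j] f x * (pd i)^[t - j] g x := by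
  induction t generalizing f g with
  | zero => simp
  | succ t ih =>
    have hf' : ContDiffOn ℝ (t + 1 : ℕ) f U := hf
    have hg' : ContDiffOn ℝ (t + 1 : ℕ) g U := hg
    have hft : ContDiffOn ℝ (t : ℕ) f U := hf.of_le (by exact_mod_cast Nat.le_succ t)
    have hgt : ContDiffOn ℝ (t : ℕ) g U := hg.of_le (by exact_mod_cast Nat.le_succ t)
    have hpf : ContDiffOn ℝ (t : ℕ) (pd i f) U := pd_contDiffOn hU hf' i
    have hpg : ContDiffOn ℝ (t : ℕ) (pd i g) U := pd_contDiffOn hU hg' i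
    have heq : Set.EqOn (pd i (fun y => f y * g y))
        (fun y => pd i f y * g y + f y * pd i g y) U :=
      fun y hy => pd_mul (diffAt_of_contDiffOn hU hf' hy) (diffAt_of_contDiffOn hU hg' hy) i
    have e1 : ∑ j ∈ Finset.range (t + 1),
          (t.choose j : ℂ) * (pd i)^[j] (pd i f) x * (pd i)^[t - j] g x
        = ∑ j ∈ Finset.range (t + 1),
          (t.choose j : ℂ) * (pd i)^[j + 1] f x * (pd i)^[t - j] g x := by
      apply Finset.sum_congr rfl
      intro j hj
      rw [← Function.iterate_succ_apply]
    have e2 : ∑ j ∈ Finset.range (t + 1),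
          (t.choose j : ℂ) * (pd i)^[j] f x * (pd i)^[t - j] (pd i g) x
        = ∑ j ∈ Finset.range (t + 1),
          (t.choose j : ℂ) * (pd i)^[j] f x * (pd i)^[t - j + 1] g x := by
      apply Finset.sum_congr rfl
      intro j hj
      rw [← Function.iterate_succ_apply]
    calc (pd i)^[t+1] (fun y => f y * g y) x
        = (pd i)^[t] (pd i (fun y => f y * g y)) x := by
          rw [Function.iterate_succ_apply]
      _ = (pd i)^[t] (fun y => pd i f y * g y + f y * pd i g y) x :=
          pd_iter_congr hU heq i t hx
      _ = (pd i)^[t] (fun y => pd i f y * g y) x + (pd i)^[t] (fun y => f y * pd i g y) x :=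
          pd_iter_add hU (hpf.mul hgt) (hft.mul hpg) i hx
      _ = (∑ j ∈ Finset.range (t + 1),
            (t.choose j : ℂ) * (pd i)^[j] (pd i f) x * (pd i)^[t - j] g x)
          + ∑ j ∈ Finset.range (t + 1),
            (t.choose j : ℂ) * (pd i)^[j] f x * (pd i)^[t - j] (pd i g) x := by
          rw [ih hpf hgt, ih hft hpg]
      _ = _ := by
          rw [e1, e2]
          exact (pascal_sum (fun j => (pd i)^[j] f x) (fun j => (pd i)^[j] g x) t).symm

end Helpers2
section Helpers3

variable {U : Set V2}

lemma mderiv_zero_eq (f : V2 → ℂ) : mderiv (0, 0) f = f := rfl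

lemma mderiv_mul (hU : IsOpen U) {b₁ b₂ : ℕ} {f g : V2 → ℂ}
    (hf : ContDiffOn ℝ (b₁ + b₂ : ℕ) f U) (hg : ContDiffOn ℝ (b₁ + b₂ : ℕ) g U)
    {κ : V2} (hκ : κ ∈ U) :
    mderiv (b₁, b₂) (fun y => f y * g y) κ
      = ∑ j ∈ Finset.range (b₁ + 1), ∑ k ∈ Finset.range (b₂ + 1),
          ((b₁.choose j : ℂ) * (b₂.choose k)) *
            (mderiv (j, k) f κ * mderiv (b₁ - j, b₂ - k) g κ) := by
  have hf2 : ContDiffOn ℝ (b₂ : ℕ) f U := hf.of_le (by exact_mod_cast Nat.le_add_left _ _)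
  have hg2 : ContDiffOn ℝ (b₂ : ℕ) g U := hg.of_le (by exact_mod_cast Nat.le_add_left _ _)
  have h1 : Set.EqOn ((pd 1)^[b₂] (fun y => f y * g y))
      (fun x => ∑ k ∈ Finset.range (b₂ + 1),
        (b₂.choose k : ℂ) * ((pd 1)^[k] f x * (pd 1)^[b₂ - k] g x)) U := by
    intro x hx
    rw [pd_iter_mul hU hf2 hg2 1 hx]
    apply Finset.sum_congr rfl
    intro k hk
    ring
  have hFk : ∀ k, k ≤ b₂ → ContDiffOn ℝ (b₁ : ℕ) ((pd 1)^[k] f) U := by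
    intro k hk
    apply pd_iter_contDiffOn hU _ 1
    exact hf.of_le (by exact_mod_cast by omega)
  have hGk : ∀ k, k ≤ b₂ → ContDiffOn ℝ (b₁ : ℕ) ((pd 1)^[b₂ - k] g) U := by
    intro k hk
    apply pd_iter_contDiffOn hU _ 1
    exact hg.of_le (by exact_mod_cast by omega)
  have hsummand : ∀ k ∈ Finset.range (b₂ + 1), ContDiffOn ℝ (b₁ : ℕ)
      (fun x => (b₂.choose k : ℂ) * ((pd 1)^[k] f x * (pd 1)^[b₂ - k] g x)) U := by
    intro k hk
    have hk' : k ≤ b₂ := Nat.lt_succ_iff.mp (Finset.mem_range.mp hk)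
    exact contDiffOn_const.mul ((hFk k hk').mul (hGk k hk'))
  show (pd 0)^[b₁] ((pd 1)^[b₂] fun y => f y * g y) κ = _
  rw [pd_iter_congr hU h1 0 b₁ hκ]
  rw [pd_iter_sum hU hsummand 0 hκ]
  rw [Finset.sum_comm]
  apply Finset.sum_congr rfl
  intro k hk
  have hk' : k ≤ b₂ := Nat.lt_succ_iff.mp (Finset.mem_range.mp hk)
  rw [pd_iter_const_mul hU ((hFk k hk').mul (hGk k hk')) _ 0 hκ]
  show (b₂.choose k : ℂ) * (pd 0)^[b₁] (fun x => (pd 1)^[k] f x * (pd 1)^[b₂ - k] g x) κ = _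
  rw [pd_iter_mul hU (hFk k hk') (hGk k hk') 0 hκ]
  rw [Finset.mul_sum]
  apply Finset.sum_congr rfl
  intro j hj
  simp only [mderiv]
  ring

lemma mderiv_add (hU : IsOpen U) {b₁ b₂ : ℕ} {f g : V2 → ℂ}
    (hf : ContDiffOn ℝ (b₁ + b₂ : ℕ) f U) (hg : ContDiffOn ℝ (b₁ + b₂ : ℕ) g U)
    {κ : V2} (hκ : κ ∈ U) :
    mderiv (b₁, b₂) (fun y => f y + g y) κ = mderiv (b₁, b₂) f κ + mderiv (b₁, b₂) g κ := by
  have hf2 : ContDiffOn ℝ (b₂ : ℕ) f U := hf.of_le (by exact_mod_cast Nat.le_add_left _ _)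
  have hg2 : ContDiffOn ℝ (b₂ : ℕ) g U := hg.of_le (by exact_mod_cast Nat.le_add_left _ _)
  have h1 : Set.EqOn ((pd 1)^[b₂] (fun y => f y + g y))
      (fun x => (pd 1)^[b₂] f x + (pd 1)^[b₂] g x) U := pd_iter_add hU hf2 hg2 1
  show (pd 0)^[b₁] ((pd 1)^[b₂] fun y => f y + g y) κ = _
  rw [pd_iter_congr hU h1 0 b₁ hκ]
  exact pd_iter_add hU (pd_iter_contDiffOn hU hf 1) (pd_iter_contDiffOn hU hg 1) 0 hκ

lemma mderiv_const_add {b₁ b₂ : ℕ} (hb : 1 ≤ b₁ + b₂) (c : ℂ) (f : V2 → ℂ) :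
    mderiv (b₁, b₂) (fun x => c + f x) = mderiv (b₁, b₂) f := by
  match b₁, b₂ with
  | 0, 0 => omega
  | b₁, k + 1 =>
    show (pd 0)^[b₁] ((pd 1)^[k+1] fun x => c + f x) = (pd 0)^[b₁] ((pd 1)^[k+1] f)
    rw [Function.iterate_succ_apply, pd_const_add, ← Function.iterate_succ_apply]
  | b + 1, 0 =>
    show (pd 0)^[b+1] ((pd 1)^[0] fun x => c + f x) = (pd 0)^[b+1] ((pd 1)^[0] f)
    simp only [Function.iterate_zero_apply]
    rw [Function.iterate_succ_apply, pd_const_add, ← Function.iterate_succ_apply]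

lemma choose_le_two_pow (n k : ℕ) : n.choose k ≤ 2 ^ n := by
  rcases le_or_gt k n with h | h
  · calc n.choose k ≤ ∑ m ∈ Finset.range (n + 1), n.choose m :=
        Finset.single_le_sum (fun _ _ => Nat.zero_le _) (Finset.mem_range.mpr (by omega))
    _ = 2 ^ n := Nat.sum_range_choose n
  · rw [Nat.choose_eq_zero_of_lt h]
    exact Nat.zero_le _

end Helpers3
section Helpers4

lemma sq_cpow_half {z : ℂ} (hz : z ≠ 0) : z ^ ((1:ℂ)/2) * z ^ ((1:ℂ)/2) = z := by
  rw [← Complex.cpow_add _ _ hz]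
  norm_num

lemma re_cpow_half {z : ℂ} (h9 : 9/10 ≤ ‖z‖) (hre : 0 < z.re) :
    1/4 ≤ (z ^ ((1:ℂ)/2)).re := by
  have hz : z ≠ 0 := by
    intro h
    rw [h] at hre
    simp at hre
  rw [Complex.cpow_def_of_ne_zero hz, Complex.exp_re]
  have hhalf : ((1:ℂ)/2).re = 1/2 ∧ ((1:ℂ)/2).im = 0 := by
    constructor <;> norm_num
  have him : (Complex.log z * ((1:ℂ)/2)).im = z.arg / 2 := by
    rw [Complex.mul_im, hhalf.1, hhalf.2, Complex.log_im]
    ring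
  have hre' : (Complex.log z * ((1:ℂ)/2)).re = Real.log (‖z‖) / 2 := by
    rw [Complex.mul_re, hhalf.1, hhalf.2, Complex.log_re]
    ring
  rw [him, hre']
  have harg : |z.arg| < π/2 := Complex.abs_arg_lt_pi_div_two_iff.mpr (Or.inl hre)
  have hπ : π ≤ 4 := Real.pi_le_four
  have hcos : 1/2 ≤ Real.cos (z.arg / 2) := by
    have h1 := Real.one_sub_sq_div_two_le_cos (x := z.arg / 2)
    have h2 := abs_le.mp (le_of_lt harg)
    nlinarith
  have he2 : (2:ℝ) ≤ Real.exp 1 := by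
    have := Real.exp_one_gt_d9
    linarith
  have he4 : Real.exp 1 ≤ 4 := by
    have := Real.exp_one_lt_d9
    linarith
  have hexp : 1/2 ≤ Real.exp (Real.log (‖z‖) / 2) := by
    have hlog : -1 ≤ Real.log (‖z‖) := by
      rw [Real.le_log_iff_exp_le (by linarith : (0:ℝ) < ‖z‖)]
      have hprod : Real.exp (-1) * Real.exp 1 = 1 := by
        rw [← Real.exp_add]
        norm_num
      nlinarith [Real.exp_pos (-1)]
    have hhalfexp : Real.exp (-(1/2)) ≥ 1/2 := by
      have hpr : Real.exp (1/2) * Real.exp (1/2) = Real.exp 1 := by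
        rw [← Real.exp_add]
        norm_num
      have hpr2 : Real.exp (-(1/2)) * Real.exp (1/2) = 1 := by
        rw [← Real.exp_add]
        norm_num
      nlinarith [Real.exp_pos (1/2), Real.exp_pos (-(1/2))]
    calc (1:ℝ)/2 ≤ Real.exp (-(1/2)) := hhalfexp
      _ ≤ Real.exp (Real.log (‖z‖) / 2) := Real.exp_le_exp.mpr (by linarith)
  nlinarith [Real.exp_pos (Real.log (‖z‖) / 2)]

lemma norm_cpow_half_le {z : ℂ} (hz : z ≠ 0) (h : ‖z‖ ≤ 11/10) :
    ‖z ^ ((1:ℂ)/2)‖ ≤ 2 := by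
  have h1 : ‖z ^ ((1:ℂ)/2)‖ * ‖z ^ ((1:ℂ)/2)‖ = ‖z‖ := by
    rw [← norm_mul, sq_cpow_half hz]
  nlinarith [norm_nonneg (z ^ ((1:ℂ)/2))]

lemma contDiffOn_cpow_half {n : WithTop ℕ∞} :
    ContDiffOn ℝ n (fun z : ℂ => z ^ ((1:ℂ)/2)) {z : ℂ | 0 < z.re} := by
  have hΩ : IsOpen {z : ℂ | 0 < z.re} := isOpen_lt continuous_const Complex.continuous_re
  have hd : DifferentiableOn ℂ (fun z : ℂ => z ^ ((1:ℂ)/2)) {z : ℂ | 0 < z.re} := by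
    intro z hz
    have hsp : z ∈ Complex.slitPlane := Complex.mem_slitPlane_iff.mpr (Or.inl hz)
    exact (differentiableAt_id.cpow (differentiableAt_const _) hsp).differentiableWithinAt
  exact ((hd.analyticOnNhd hΩ).contDiffOn_of_completeSpace).restrict_scalars ℝ

end Helpers4
section Main

lemma one_add_facts {w : ℂ} (hw : ‖w‖ ≤ 1/10) :
    9/10 ≤ ‖1 + w‖ ∧ ‖1 + w‖ ≤ 11/10 ∧ 0 < (1 + w).re := by
  have hw' : ‖w‖ ≤ 1/10 := hw
  have hre : |w.re| ≤ ‖w‖ := Complex.abs_re_le_norm w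
  refine ⟨?_, ?_, ?_⟩
  · have h1 : ‖(1:ℂ)‖ ≤ ‖1 + w‖ + ‖-w‖ := by
      calc ‖(1:ℂ)‖ = ‖(1 + w) + (-w)‖ := by ring_nf
        _ ≤ _ := norm_add_le _ _
    simp only [norm_one, norm_neg] at h1
    linarith
  · calc ‖1 + w‖ ≤ ‖1‖ + ‖w‖ := norm_add_le _ _
      _ ≤ 11/10 := by simp; linarith
  · have := abs_le.mp hre
    simp only [Complex.add_re, Complex.one_re]
    linarith

lemma quarter_le_norm {w : ℂ} (h : 1/4 ≤ w.re) : 1/4 ≤ ‖w‖ :=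
  h.trans ((Complex.re_le_norm w).trans_eq rfl)

lemma mderiv_mul' {U : Set V2} (hU : IsOpen U) {b₁ b₂ : ℕ} {f g : V2 → ℂ}
    (hf : ContDiffOn ℝ (b₁ + b₂ : ℕ) f U) (hg : ContDiffOn ℝ (b₁ + b₂ : ℕ) g U)
    {κ : V2} (hκ : κ ∈ U) :
    mderiv (b₁, b₂) (fun y => f y * g y) κ
      = ∑ p ∈ Finset.range (b₁ + 1) ×ˢ Finset.range (b₂ + 1),
          ((b₁.choose p.1 : ℂ) * (b₂.choose p.2)) *
            (mderiv p f κ * mderiv (b₁ - p.1, b₂ - p.2) g κ) := by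
  rw [Finset.sum_product, mderiv_mul hU hf hg hκ]

/-- The inductive statement: bounds of all orders `≤ n` for `(1+F)^(1/2)`,
`(1+F₀)^(1/2)` and their difference. -/
def GB (βmax : ℕ) (A : ℝ) (n : ℕ) (C : ℝ) : Prop :=
  ∀ U : Set V2, IsOpen U → ∀ δ η : ℝ, 0 < δ → 0 < η →
  ∀ F F₀ : V2 → ℂ, ContDiffOn ℝ βmax F U → ContDiffOn ℝ βmax F₀ U →
  (∀ κ ∈ U, ‖F κ‖ ≤ 1/10) → (∀ κ ∈ U, ‖F₀ κ‖ ≤ 1/10) →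
  (∀ κ ∈ U, ∀ β : ℕ × ℕ, β.1 + β.2 ≤ βmax → ‖mderiv β F κ‖ ≤ A / δ ^ (β.1 + β.2)) →
  (∀ κ ∈ U, ∀ β : ℕ × ℕ, β.1 + β.2 ≤ βmax → ‖mderiv β F₀ κ‖ ≤ A / δ ^ (β.1 + β.2)) →
  (∀ κ ∈ U, ∀ β : ℕ × ℕ, β.1 + β.2 ≤ βmax →
      ‖mderiv β (fun x => F x - F₀ x) κ‖ ≤ η / δ ^ (β.1 + β.2)) →
  ∀ κ ∈ U, ∀ β : ℕ × ℕ, β.1 + β.2 ≤ n →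
    ‖mderiv β (fun x => (1 + F x) ^ ((1:ℂ)/2)) κ‖ ≤ C / δ ^ (β.1 + β.2) ∧
    ‖mderiv β (fun x => (1 + F₀ x) ^ ((1:ℂ)/2)) κ‖ ≤ C / δ ^ (β.1 + β.2) ∧
    ‖mderiv β (fun x => (1 + F x) ^ ((1:ℂ)/2) - (1 + F₀ x) ^ ((1:ℂ)/2)) κ‖ ≤
      C * η / δ ^ (β.1 + β.2)

lemma gb_zero (βmax : ℕ) (A : ℝ) : GB βmax A 0 2 := by
  intro U hU δ η hδ hη F F₀ hF hF₀ hFb hF₀b hmF hmF₀ hmD κ hκ β hβ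
  obtain ⟨b₁, b₂⟩ := β
  simp only at hβ
  have hb1 : b₁ = 0 := by omega
  have hb2 : b₂ = 0 := by omega
  subst hb1
  subst hb2
  have hfF := one_add_facts (hFb κ hκ)
  have hfF₀ := one_add_facts (hF₀b κ hκ)
  have hneF : (1 : ℂ) + F κ ≠ 0 := by
    intro h0
    have := hfF.2.2
    rw [h0] at this
    simp at this
  have hneF₀ : (1 : ℂ) + F₀ κ ≠ 0 := by
    intro h0
    have := hfF₀.2.2
    rw [h0] at this
    simp at this
  rw [mderiv_zero_eq, mderiv_zero_eq, mderiv_zero_eq]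
  simp only [Nat.add_zero, pow_zero, div_one]
  refine ⟨norm_cpow_half_le hneF hfF.2.1, norm_cpow_half_le hneF₀ hfF₀.2.1, ?_⟩
  have hprod : ((1 + F κ) ^ ((1:ℂ)/2) - (1 + F₀ κ) ^ ((1:ℂ)/2))
      * ((1 + F κ) ^ ((1:ℂ)/2) + (1 + F₀ κ) ^ ((1:ℂ)/2)) = F κ - F₀ κ := by
    linear_combination sq_cpow_half hneF - sq_cpow_half hneF₀
  have hre : 1/2 ≤ ((1 + F κ) ^ ((1:ℂ)/2) + (1 + F₀ κ) ^ ((1:ℂ)/2)).re := by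
    rw [Complex.add_re]
    have h1 := re_cpow_half hfF.1 hfF.2.2
    have h2 := re_cpow_half hfF₀.1 hfF₀.2.2
    linarith
  have hrn : 1/2 ≤ ‖(1 + F κ) ^ ((1:ℂ)/2) + (1 + F₀ κ) ^ ((1:ℂ)/2)‖ :=
    hre.trans ((Complex.re_le_norm _).trans_eq rfl)
  have hDη : ‖F κ - F₀ κ‖ ≤ η := by
    have := hmD κ hκ (0, 0) (by simp)
    rw [mderiv_zero_eq] at this
    simpa using this
  have hmm : ‖(1 + F κ) ^ ((1:ℂ)/2) - (1 + F₀ κ) ^ ((1:ℂ)/2)‖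
      * ‖(1 + F κ) ^ ((1:ℂ)/2) + (1 + F₀ κ) ^ ((1:ℂ)/2)‖ = ‖F κ - F₀ κ‖ := by
    rw [← norm_mul, hprod]
  have h3 : ‖(1 + F κ) ^ ((1:ℂ)/2) - (1 + F₀ κ) ^ ((1:ℂ)/2)‖ * (1/2)
      ≤ ‖(1 + F κ) ^ ((1:ℂ)/2) - (1 + F₀ κ) ^ ((1:ℂ)/2)‖
        * ‖(1 + F κ) ^ ((1:ℂ)/2) + (1 + F₀ κ) ^ ((1:ℂ)/2)‖ :=
    mul_le_mul_of_nonneg_left hrn (norm_nonneg _)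
  rw [hmm] at h3
  linarith

lemma sqrt_top_bound (βmax : ℕ) (A : ℝ) {U : Set V2} (hU : IsOpen U) {δ : ℝ} (hδ : 0 < δ)
    {F : V2 → ℂ} (hF : ContDiffOn ℝ (βmax : ℕ) F U) (hFb : ∀ κ ∈ U, ‖F κ‖ ≤ 1/10)
    {n : ℕ} (hn : n + 1 ≤ βmax)
    (hmF : ∀ κ ∈ U, ∀ β : ℕ × ℕ, β.1 + β.2 ≤ βmax → ‖mderiv β F κ‖ ≤ A / δ ^ (β.1 + β.2))
    {C₁ : ℝ} (hC₁ : 0 < C₁)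
    (hlow : ∀ κ ∈ U, ∀ β : ℕ × ℕ, β.1 + β.2 ≤ n →
      ‖mderiv β (fun x => (1 + F x) ^ ((1:ℂ)/2)) κ‖ ≤ C₁ / δ ^ (β.1 + β.2))
    {κ : V2} (hκ : κ ∈ U) {b₁ b₂ : ℕ} (hb : b₁ + b₂ = n + 1) :
    ‖mderiv (b₁, b₂) (fun x => (1 + F x) ^ ((1:ℂ)/2)) κ‖
      ≤ (2*A + 2*((n+2)*(n+2)) * 2^(n+1) * (C₁*C₁)) / δ ^ (n + 1) := by
  have hδp : (0:ℝ) < δ ^ (n+1) := pow_pos hδ _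
  have hfacts : ∀ x ∈ U, 9/10 ≤ ‖1 + F x‖ ∧ ‖1 + F x‖ ≤ 11/10 ∧
      0 < (1 + F x).re := fun x hx => one_add_facts (hFb x hx)
  have hne : ∀ x ∈ U, (1 : ℂ) + F x ≠ 0 := by
    intro x hx h0
    have := (hfacts x hx).2.2
    rw [h0] at this
    simp at this
  have hScd : ContDiffOn ℝ (βmax : ℕ) (fun x => (1 + F x) ^ ((1:ℂ)/2)) U :=
    contDiffOn_cpow_half.comp (contDiffOn_const.add hF) (fun x hx => (hfacts x hx).2.2)
  have hSm : ContDiffOn ℝ (b₁ + b₂ : ℕ) (fun x => (1 + F x) ^ ((1:ℂ)/2)) U :=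
    hScd.of_le (by exact_mod_cast (by omega : b₁ + b₂ ≤ βmax))
  set a : ℕ × ℕ → ℂ := fun p =>
    ((b₁.choose p.1 : ℂ) * (b₂.choose p.2)) *
      (mderiv p (fun x => (1 + F x) ^ ((1:ℂ)/2)) κ *
        mderiv (b₁ - p.1, b₂ - p.2) (fun x => (1 + F x) ^ ((1:ℂ)/2)) κ) with ha
  have hid : Set.EqOn (fun x => ((1 + F x) ^ ((1:ℂ)/2)) * ((1 + F x) ^ ((1:ℂ)/2)))
      (fun x => (1:ℂ) + F x) U := fun x hx => sq_cpow_half (hne x hx)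
  have h2 : mderiv (b₁, b₂) F κ
      = ∑ p ∈ Finset.range (b₁ + 1) ×ˢ Finset.range (b₂ + 1), a p := by
    rw [← mderiv_mul' hU hSm hSm hκ, ← mderiv_const_add (by omega : 1 ≤ b₁ + b₂) 1 F]
    exact (mderiv_congr hU hid (b₁, b₂) hκ).symm
  have hp0 : ((0,0) : ℕ × ℕ) ∈ Finset.range (b₁ + 1) ×ˢ Finset.range (b₂ + 1) := by simp
  have hp1 : ((b₁, b₂) : ℕ × ℕ) ∈
      (Finset.range (b₁ + 1) ×ˢ Finset.range (b₂ + 1)).erase (0,0) := by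
    rw [Finset.mem_erase]
    refine ⟨?_, by simp⟩
    simp only [ne_eq, Prod.mk.injEq, not_and]
    intro h1 h2
    omega
  rw [← Finset.add_sum_erase _ _ hp0, ← Finset.add_sum_erase _ _ hp1] at h2
  have ha00 : a (0, 0) = (1 + F κ) ^ ((1:ℂ)/2)
      * mderiv (b₁, b₂) (fun x => (1 + F x) ^ ((1:ℂ)/2)) κ := by
    simp only [ha, mderiv_zero_eq, Nat.choose_zero_right, Nat.sub_zero, Nat.cast_one, one_mul]
  have hab : a (b₁, b₂) = mderiv (b₁, b₂) (fun x => (1 + F x) ^ ((1:ℂ)/2)) κ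
      * ((1 + F κ) ^ ((1:ℂ)/2)) := by
    simp only [ha, Nat.choose_self, Nat.sub_self, mderiv_zero_eq, Nat.cast_one, one_mul]
  rw [ha00, hab] at h2
  have hkey : 2 * ((1 + F κ) ^ ((1:ℂ)/2)) * mderiv (b₁, b₂) (fun x => (1 + F x) ^ ((1:ℂ)/2)) κ
      = mderiv (b₁, b₂) F κ
        - ∑ p ∈ ((Finset.range (b₁ + 1) ×ˢ Finset.range (b₂ + 1)).erase (0,0)).erase (b₁, b₂),
            a p := by
    linear_combination -h2
  -- bound each middle term
  have hterm : ∀ p ∈ ((Finset.range (b₁ + 1) ×ˢ Finset.range (b₂ + 1)).erase (0,0)).erase (b₁, b₂),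
      ‖a p‖ ≤ 2^(n+1) * (C₁ * C₁) / δ^(n+1) := by
    intro p hp
    have hp' := Finset.mem_erase.mp hp
    have hp'' := Finset.mem_erase.mp hp'.2
    obtain ⟨j, k⟩ := p
    have hjk := Finset.mem_product.mp hp''.2
    have hj : j ≤ b₁ := by
      have := Finset.mem_range.mp hjk.1
      omega
    have hk : k ≤ b₂ := by
      have := Finset.mem_range.mp hjk.2
      omega
    have hne0 : ¬(j = 0 ∧ k = 0) := by
      intro ⟨e1, e2⟩
      exact hp''.1 (by rw [e1, e2])
    have hne1 : ¬(j = b₁ ∧ k = b₂) := by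
      intro ⟨e1, e2⟩
      exact hp'.1 (by rw [e1, e2])
    have hjk1 : 1 ≤ j + k := by omega
    have hjkn : j + k ≤ n := by omega
    have hjke : (b₁ - j) + (b₂ - k) ≤ n := by omega
    have hm1 : ‖mderiv (j, k) (fun x => (1 + F x) ^ ((1:ℂ)/2)) κ‖ ≤ C₁ / δ^(j+k) := by
      simpa using hlow κ hκ (j, k) (by simpa using hjkn)
    have hm2 : ‖mderiv (b₁ - j, b₂ - k) (fun x => (1 + F x) ^ ((1:ℂ)/2)) κ‖
        ≤ C₁ / δ^((b₁ - j) + (b₂ - k)) := by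
      simpa using hlow κ hκ (b₁ - j, b₂ - k) (by simpa using hjke)
    have hcoef : ((b₁.choose j : ℝ)) * (b₂.choose k) ≤ 2^(n+1) := by
      have h1 : b₁.choose j * b₂.choose k ≤ 2^(n+1) := by
        calc b₁.choose j * b₂.choose k ≤ 2^b₁ * 2^b₂ :=
            Nat.mul_le_mul (choose_le_two_pow b₁ j) (choose_le_two_pow b₂ k)
          _ = 2^(n+1) := by rw [← pow_add, hb]
      exact_mod_cast h1
    have hn1 : (0:ℝ) ≤ C₁ / δ^(j+k) := le_of_lt (div_pos hC₁ (pow_pos hδ _))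
    have hn2 : (0:ℝ) ≤ C₁ / δ^((b₁ - j) + (b₂ - k)) :=
      le_of_lt (div_pos hC₁ (pow_pos hδ _))
    have hnorm : ‖a (j, k)‖ = ((b₁.choose j : ℝ) * (b₂.choose k)) *
        (‖mderiv (j, k) (fun x => (1 + F x) ^ ((1:ℂ)/2)) κ‖ *
          ‖mderiv (b₁ - j, b₂ - k) (fun x => (1 + F x) ^ ((1:ℂ)/2)) κ‖) := by
      rw [ha]
      simp only [norm_mul, Complex.norm_natCast]
    calc ‖a (j, k)‖
        = ((b₁.choose j : ℝ) * (b₂.choose k)) *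
          (‖mderiv (j, k) (fun x => (1 + F x) ^ ((1:ℂ)/2)) κ‖ *
            ‖mderiv (b₁ - j, b₂ - k) (fun x => (1 + F x) ^ ((1:ℂ)/2)) κ‖) := hnorm
      _ ≤ 2^(n+1) * ((C₁ / δ^(j+k)) * (C₁ / δ^((b₁ - j) + (b₂ - k)))) := by
          apply mul_le_mul hcoef _ (by positivity) (by positivity)
          exact mul_le_mul hm1 hm2 (norm_nonneg _) hn1
      _ = 2^(n+1) * (C₁ * C₁) / δ^(n+1) := by
          rw [div_mul_div_comm, ← pow_add,
            (show (j+k) + ((b₁ - j) + (b₂ - k)) = n + 1 by omega)]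
          ring
  have hcard : (((Finset.range (b₁ + 1) ×ˢ Finset.range (b₂ + 1)).erase (0,0)).erase (b₁, b₂)).card
      ≤ (n+2) * (n+2) := by
    calc _ ≤ ((Finset.range (b₁ + 1) ×ˢ Finset.range (b₂ + 1)).erase (0,0)).card :=
        Finset.card_erase_le
      _ ≤ (Finset.range (b₁ + 1) ×ˢ Finset.range (b₂ + 1)).card := Finset.card_erase_le
      _ = (b₁ + 1) * (b₂ + 1) := by rw [Finset.card_product, Finset.card_range, Finset.card_range]
      _ ≤ (n+2) * (n+2) := Nat.mul_le_mul (by omega) (by omega)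
  have hRbound : ‖∑ p ∈ ((Finset.range (b₁ + 1) ×ˢ Finset.range (b₂ + 1)).erase (0,0)).erase
        (b₁, b₂), a p‖ ≤ ((n+2) * (n+2) : ℝ) * (2^(n+1) * (C₁ * C₁) / δ^(n+1)) := by
    calc ‖∑ p ∈ _, a p‖ ≤ ∑ p ∈ ((Finset.range (b₁ + 1) ×ˢ Finset.range (b₂ + 1)).erase
          (0,0)).erase (b₁, b₂), ‖a p‖ := norm_sum_le _ _
      _ ≤ (((Finset.range (b₁ + 1) ×ˢ Finset.range (b₂ + 1)).erase (0,0)).erase (b₁, b₂)).card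
          • (2^(n+1) * (C₁ * C₁) / δ^(n+1)) := Finset.sum_le_card_nsmul _ _ _ hterm
      _ = (((Finset.range (b₁ + 1) ×ˢ Finset.range (b₂ + 1)).erase (0,0)).erase (b₁, b₂)).card
          * (2^(n+1) * (C₁ * C₁) / δ^(n+1)) := nsmul_eq_mul _ _
      _ ≤ ((n+2) * (n+2) : ℝ) * (2^(n+1) * (C₁ * C₁) / δ^(n+1)) := by
          apply mul_le_mul_of_nonneg_right _ (by positivity)
          exact_mod_cast hcard
  have hFn : ‖mderiv (b₁, b₂) F κ‖ ≤ A / δ^(n+1) := by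
    have := hmF κ hκ (b₁, b₂) (by simpa using (by omega : b₁ + b₂ ≤ βmax))
    simpa [hb] using this
  have hSn : 1/4 ≤ ‖(1 + F κ) ^ ((1:ℂ)/2)‖ :=
    quarter_le_norm (re_cpow_half (hfacts κ hκ).1 (hfacts κ hκ).2.2)
  have hkn := congrArg norm hkey
  rw [norm_mul, norm_mul] at hkn
  simp only [Complex.norm_ofNat] at hkn
  have htri : ‖mderiv (b₁, b₂) F κ
      - ∑ p ∈ ((Finset.range (b₁ + 1) ×ˢ Finset.range (b₂ + 1)).erase (0,0)).erase (b₁, b₂),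
        a p‖ ≤ A / δ^(n+1) + ((n+2) * (n+2) : ℝ) * (2^(n+1) * (C₁ * C₁) / δ^(n+1)) := by
    calc _ ≤ ‖mderiv (b₁, b₂) F κ‖ + ‖∑ p ∈ _, a p‖ := norm_sub_le _ _
      _ ≤ _ := add_le_add hFn hRbound
  have hXb : ‖mderiv (b₁, b₂) (fun x => (1 + F x) ^ ((1:ℂ)/2)) κ‖
      ≤ 2 * (A / δ^(n+1) + ((n+2) * (n+2) : ℝ) * (2^(n+1) * (C₁ * C₁) / δ^(n+1))) := by
    nlinarith [norm_nonneg (mderiv (b₁, b₂) (fun x => (1 + F x) ^ ((1:ℂ)/2)) κ)]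
  calc ‖mderiv (b₁, b₂) (fun x => (1 + F x) ^ ((1:ℂ)/2)) κ‖
      ≤ 2 * (A / δ^(n+1) + ((n+2) * (n+2) : ℝ) * (2^(n+1) * (C₁ * C₁) / δ^(n+1))) := hXb
    _ = (2*A + 2*((n+2)*(n+2)) * 2^(n+1) * (C₁*C₁)) / δ ^ (n + 1) := by
        field_simp

end Main
section Main2

lemma sqrt_diff_top_bound (βmax : ℕ) {U : Set V2} (hU : IsOpen U) {δ η : ℝ}
    (hδ : 0 < δ) (hη : 0 < η)
    {F F₀ : V2 → ℂ} (hF : ContDiffOn ℝ (βmax : ℕ) F U) (hF₀ : ContDiffOn ℝ (βmax : ℕ) F₀ U)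
    (hFb : ∀ κ ∈ U, ‖F κ‖ ≤ 1/10) (hF₀b : ∀ κ ∈ U, ‖F₀ κ‖ ≤ 1/10)
    {n : ℕ} (hn : n + 1 ≤ βmax)
    (hmD : ∀ κ ∈ U, ∀ β : ℕ × ℕ, β.1 + β.2 ≤ βmax →
      ‖mderiv β (fun x => F x - F₀ x) κ‖ ≤ η / δ ^ (β.1 + β.2))
    {C₁ C₂ : ℝ} (hC₁ : 0 < C₁) (hC₂ : 0 < C₂)
    (hSfull : ∀ κ ∈ U, ∀ β : ℕ × ℕ, β.1 + β.2 ≤ n + 1 →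
      ‖mderiv β (fun x => (1 + F x) ^ ((1:ℂ)/2)) κ‖ ≤ C₂ / δ ^ (β.1 + β.2))
    (hS₀full : ∀ κ ∈ U, ∀ β : ℕ × ℕ, β.1 + β.2 ≤ n + 1 →
      ‖mderiv β (fun x => (1 + F₀ x) ^ ((1:ℂ)/2)) κ‖ ≤ C₂ / δ ^ (β.1 + β.2))
    (hDlow : ∀ κ ∈ U, ∀ β : ℕ × ℕ, β.1 + β.2 ≤ n →
      ‖mderiv β (fun x => (1 + F x) ^ ((1:ℂ)/2) - (1 + F₀ x) ^ ((1:ℂ)/2)) κ‖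
        ≤ C₁ * η / δ ^ (β.1 + β.2))
    {κ : V2} (hκ : κ ∈ U) {b₁ b₂ : ℕ} (hb : b₁ + b₂ = n + 1) :
    ‖mderiv (b₁, b₂) (fun x => (1 + F x) ^ ((1:ℂ)/2) - (1 + F₀ x) ^ ((1:ℂ)/2)) κ‖
      ≤ (2 + ((n+2)*(n+2)) * 2^(n+3) * (C₁*C₂)) * η / δ ^ (n + 1) := by
  have hδp : (0:ℝ) < δ ^ (n+1) := pow_pos hδ _
  have hfactsF : ∀ x ∈ U, 9/10 ≤ ‖1 + F x‖ ∧ ‖1 + F x‖ ≤ 11/10 ∧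
      0 < (1 + F x).re := fun x hx => one_add_facts (hFb x hx)
  have hfactsF₀ : ∀ x ∈ U, 9/10 ≤ ‖1 + F₀ x‖ ∧ ‖1 + F₀ x‖ ≤ 11/10 ∧
      0 < (1 + F₀ x).re := fun x hx => one_add_facts (hF₀b x hx)
  have hneF : ∀ x ∈ U, (1 : ℂ) + F x ≠ 0 := by
    intro x hx h0
    have := (hfactsF x hx).2.2
    rw [h0] at this
    simp at this
  have hneF₀ : ∀ x ∈ U, (1 : ℂ) + F₀ x ≠ 0 := by
    intro x hx h0
    have := (hfactsF₀ x hx).2.2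
    rw [h0] at this
    simp at this
  have hScd : ContDiffOn ℝ (βmax : ℕ) (fun x => (1 + F x) ^ ((1:ℂ)/2)) U :=
    contDiffOn_cpow_half.comp (contDiffOn_const.add hF) (fun x hx => (hfactsF x hx).2.2)
  have hS₀cd : ContDiffOn ℝ (βmax : ℕ) (fun x => (1 + F₀ x) ^ ((1:ℂ)/2)) U :=
    contDiffOn_cpow_half.comp (contDiffOn_const.add hF₀) (fun x hx => (hfactsF₀ x hx).2.2)
  have hDm : ContDiffOn ℝ (b₁ + b₂ : ℕ)
      (fun x => (1 + F x) ^ ((1:ℂ)/2) - (1 + F₀ x) ^ ((1:ℂ)/2)) U :=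
    (hScd.sub hS₀cd).of_le (by exact_mod_cast (by omega : b₁ + b₂ ≤ βmax))
  have hGm : ContDiffOn ℝ (b₁ + b₂ : ℕ)
      (fun x => (1 + F x) ^ ((1:ℂ)/2) + (1 + F₀ x) ^ ((1:ℂ)/2)) U :=
    (hScd.add hS₀cd).of_le (by exact_mod_cast (by omega : b₁ + b₂ ≤ βmax))
  set a : ℕ × ℕ → ℂ := fun p =>
    ((b₁.choose p.1 : ℂ) * (b₂.choose p.2)) *
      (mderiv p (fun x => (1 + F x) ^ ((1:ℂ)/2) - (1 + F₀ x) ^ ((1:ℂ)/2)) κ *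
        mderiv (b₁ - p.1, b₂ - p.2)
          (fun x => (1 + F x) ^ ((1:ℂ)/2) + (1 + F₀ x) ^ ((1:ℂ)/2)) κ) with ha
  have hid : Set.EqOn
      (fun x => ((1 + F x) ^ ((1:ℂ)/2) - (1 + F₀ x) ^ ((1:ℂ)/2))
        * ((1 + F x) ^ ((1:ℂ)/2) + (1 + F₀ x) ^ ((1:ℂ)/2)))
      (fun x => F x - F₀ x) U := by
    intro x hx
    have h1 := sq_cpow_half (hneF x hx)
    have h2 := sq_cpow_half (hneF₀ x hx)
    simp only
    linear_combination h1 - h2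
  have h2 : mderiv (b₁, b₂) (fun x => F x - F₀ x) κ
      = ∑ p ∈ Finset.range (b₁ + 1) ×ˢ Finset.range (b₂ + 1), a p := by
    rw [← mderiv_mul' hU hDm hGm hκ]
    exact (mderiv_congr hU hid (b₁, b₂) hκ).symm
  have hp1 : ((b₁, b₂) : ℕ × ℕ) ∈ Finset.range (b₁ + 1) ×ˢ Finset.range (b₂ + 1) := by simp
  rw [← Finset.add_sum_erase _ _ hp1] at h2
  have hab : a (b₁, b₂)
      = mderiv (b₁, b₂) (fun x => (1 + F x) ^ ((1:ℂ)/2) - (1 + F₀ x) ^ ((1:ℂ)/2)) κ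
        * ((1 + F κ) ^ ((1:ℂ)/2) + (1 + F₀ κ) ^ ((1:ℂ)/2)) := by
    simp only [ha, Nat.choose_self, Nat.sub_self, mderiv_zero_eq, Nat.cast_one, one_mul]
  rw [hab] at h2
  -- bound the remainder terms
  have hterm : ∀ p ∈ (Finset.range (b₁ + 1) ×ˢ Finset.range (b₂ + 1)).erase (b₁, b₂),
      ‖a p‖ ≤ 2^(n+1) * (C₁ * (2 * C₂)) * η / δ^(n+1) := by
    intro p hp
    have hp' := Finset.mem_erase.mp hp
    obtain ⟨j, k⟩ := p
    have hjk := Finset.mem_product.mp hp'.2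
    have hj : j ≤ b₁ := by
      have := Finset.mem_range.mp hjk.1
      omega
    have hk : k ≤ b₂ := by
      have := Finset.mem_range.mp hjk.2
      omega
    have hne1 : ¬(j = b₁ ∧ k = b₂) := by
      intro ⟨e1, e2⟩
      exact hp'.1 (by rw [e1, e2])
    have hjkn : j + k ≤ n := by omega
    have hjke : (b₁ - j) + (b₂ - k) ≤ n + 1 := by omega
    have hm1 : ‖mderiv (j, k) (fun x => (1 + F x) ^ ((1:ℂ)/2) - (1 + F₀ x) ^ ((1:ℂ)/2)) κ‖
        ≤ C₁ * η / δ^(j+k) := by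
      simpa using hDlow κ hκ (j, k) (by simpa using hjkn)
    have hsum : mderiv (b₁ - j, b₂ - k)
        (fun x => (1 + F x) ^ ((1:ℂ)/2) + (1 + F₀ x) ^ ((1:ℂ)/2)) κ
        = mderiv (b₁ - j, b₂ - k) (fun x => (1 + F x) ^ ((1:ℂ)/2)) κ
          + mderiv (b₁ - j, b₂ - k) (fun x => (1 + F₀ x) ^ ((1:ℂ)/2)) κ := by
      apply mderiv_add hU _ _ hκ
      · exact hScd.of_le (by exact_mod_cast (by omega : (b₁ - j) + (b₂ - k) ≤ βmax))
      · exact hS₀cd.of_le (by exact_mod_cast (by omega : (b₁ - j) + (b₂ - k) ≤ βmax))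
    have hm2 : ‖mderiv (b₁ - j, b₂ - k)
        (fun x => (1 + F x) ^ ((1:ℂ)/2) + (1 + F₀ x) ^ ((1:ℂ)/2)) κ‖
        ≤ 2 * C₂ / δ^((b₁ - j) + (b₂ - k)) := by
      rw [hsum]
      have e1 : ‖mderiv (b₁ - j, b₂ - k) (fun x => (1 + F x) ^ ((1:ℂ)/2)) κ‖
          ≤ C₂ / δ^((b₁ - j) + (b₂ - k)) := by
        simpa using hSfull κ hκ (b₁ - j, b₂ - k) (by simpa using hjke)
      have e2 : ‖mderiv (b₁ - j, b₂ - k) (fun x => (1 + F₀ x) ^ ((1:ℂ)/2)) κ‖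
          ≤ C₂ / δ^((b₁ - j) + (b₂ - k)) := by
        simpa using hS₀full κ hκ (b₁ - j, b₂ - k) (by simpa using hjke)
      calc _ ≤ ‖mderiv (b₁ - j, b₂ - k) (fun x => (1 + F x) ^ ((1:ℂ)/2)) κ‖
            + ‖mderiv (b₁ - j, b₂ - k) (fun x => (1 + F₀ x) ^ ((1:ℂ)/2)) κ‖ := norm_add_le _ _
        _ ≤ C₂ / δ^((b₁ - j) + (b₂ - k)) + C₂ / δ^((b₁ - j) + (b₂ - k)) := add_le_add e1 e2
        _ = 2 * C₂ / δ^((b₁ - j) + (b₂ - k)) := by ring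
    have hcoef : ((b₁.choose j : ℝ)) * (b₂.choose k) ≤ 2^(n+1) := by
      have h1 : b₁.choose j * b₂.choose k ≤ 2^(n+1) := by
        calc b₁.choose j * b₂.choose k ≤ 2^b₁ * 2^b₂ :=
            Nat.mul_le_mul (choose_le_two_pow b₁ j) (choose_le_two_pow b₂ k)
          _ = 2^(n+1) := by rw [← pow_add, hb]
      exact_mod_cast h1
    have hn1 : (0:ℝ) ≤ C₁ * η / δ^(j+k) :=
      le_of_lt (div_pos (mul_pos hC₁ hη) (pow_pos hδ _))
    have hnorm : ‖a (j, k)‖ = ((b₁.choose j : ℝ) * (b₂.choose k)) *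
        (‖mderiv (j, k) (fun x => (1 + F x) ^ ((1:ℂ)/2) - (1 + F₀ x) ^ ((1:ℂ)/2)) κ‖ *
          ‖mderiv (b₁ - j, b₂ - k)
            (fun x => (1 + F x) ^ ((1:ℂ)/2) + (1 + F₀ x) ^ ((1:ℂ)/2)) κ‖) := by
      rw [ha]
      simp only [norm_mul, Complex.norm_natCast]
    calc ‖a (j, k)‖
        = _ := hnorm
      _ ≤ 2^(n+1) * ((C₁ * η / δ^(j+k)) * (2 * C₂ / δ^((b₁ - j) + (b₂ - k)))) := by
          apply mul_le_mul hcoef _ (by positivity) (by positivity)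
          exact mul_le_mul hm1 hm2 (norm_nonneg _) hn1
      _ = 2^(n+1) * (C₁ * (2 * C₂)) * η / δ^(n+1) := by
          rw [div_mul_div_comm, ← pow_add,
            (show (j+k) + ((b₁ - j) + (b₂ - k)) = n + 1 by omega)]
          ring
  have hcard : ((Finset.range (b₁ + 1) ×ˢ Finset.range (b₂ + 1)).erase (b₁, b₂)).card
      ≤ (n+2) * (n+2) := by
    calc _ ≤ (Finset.range (b₁ + 1) ×ˢ Finset.range (b₂ + 1)).card := Finset.card_erase_le
      _ = (b₁ + 1) * (b₂ + 1) := by rw [Finset.card_product, Finset.card_range, Finset.card_range]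
      _ ≤ (n+2) * (n+2) := Nat.mul_le_mul (by omega) (by omega)
  have hRbound : ‖∑ p ∈ (Finset.range (b₁ + 1) ×ˢ Finset.range (b₂ + 1)).erase (b₁, b₂), a p‖
      ≤ ((n+2) * (n+2) : ℝ) * (2^(n+1) * (C₁ * (2 * C₂)) * η / δ^(n+1)) := by
    calc ‖∑ p ∈ _, a p‖
        ≤ ∑ p ∈ (Finset.range (b₁ + 1) ×ˢ Finset.range (b₂ + 1)).erase (b₁, b₂), ‖a p‖ :=
          norm_sum_le _ _
      _ ≤ ((Finset.range (b₁ + 1) ×ˢ Finset.range (b₂ + 1)).erase (b₁, b₂)).card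
          • (2^(n+1) * (C₁ * (2 * C₂)) * η / δ^(n+1)) := Finset.sum_le_card_nsmul _ _ _ hterm
      _ = ((Finset.range (b₁ + 1) ×ˢ Finset.range (b₂ + 1)).erase (b₁, b₂)).card
          * (2^(n+1) * (C₁ * (2 * C₂)) * η / δ^(n+1)) := nsmul_eq_mul _ _
      _ ≤ _ := by
          apply mul_le_mul_of_nonneg_right _ (by positivity)
          exact_mod_cast hcard
  have hkey : mderiv (b₁, b₂) (fun x => (1 + F x) ^ ((1:ℂ)/2) - (1 + F₀ x) ^ ((1:ℂ)/2)) κ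
      * ((1 + F κ) ^ ((1:ℂ)/2) + (1 + F₀ κ) ^ ((1:ℂ)/2))
      = mderiv (b₁, b₂) (fun x => F x - F₀ x) κ
        - ∑ p ∈ (Finset.range (b₁ + 1) ×ˢ Finset.range (b₂ + 1)).erase (b₁, b₂), a p := by
    linear_combination -h2
  have hDn : ‖mderiv (b₁, b₂) (fun x => F x - F₀ x) κ‖ ≤ η / δ^(n+1) := by
    have := hmD κ hκ (b₁, b₂) (by simpa using (by omega : b₁ + b₂ ≤ βmax))
    simpa [hb] using this
  have hrn : 1/2 ≤ ‖(1 + F κ) ^ ((1:ℂ)/2) + (1 + F₀ κ) ^ ((1:ℂ)/2)‖ := by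
    have h1 := re_cpow_half (hfactsF κ hκ).1 (hfactsF κ hκ).2.2
    have h2 := re_cpow_half (hfactsF₀ κ hκ).1 (hfactsF₀ κ hκ).2.2
    have : 1/2 ≤ ((1 + F κ) ^ ((1:ℂ)/2) + (1 + F₀ κ) ^ ((1:ℂ)/2)).re := by
      rw [Complex.add_re]
      linarith
    exact this.trans ((Complex.re_le_norm _).trans_eq rfl)
  have hkn := congrArg norm hkey
  rw [norm_mul] at hkn
  have htri : ‖mderiv (b₁, b₂) (fun x => F x - F₀ x) κ
      - ∑ p ∈ (Finset.range (b₁ + 1) ×ˢ Finset.range (b₂ + 1)).erase (b₁, b₂), a p‖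
      ≤ η / δ^(n+1) + ((n+2) * (n+2) : ℝ) * (2^(n+1) * (C₁ * (2 * C₂)) * η / δ^(n+1)) := by
    calc _ ≤ ‖mderiv (b₁, b₂) (fun x => F x - F₀ x) κ‖ + ‖∑ p ∈ _, a p‖ := norm_sub_le _ _
      _ ≤ _ := add_le_add hDn hRbound
  have hXb : ‖mderiv (b₁, b₂) (fun x => (1 + F x) ^ ((1:ℂ)/2) - (1 + F₀ x) ^ ((1:ℂ)/2)) κ‖
      ≤ 2 * (η / δ^(n+1) + ((n+2) * (n+2) : ℝ) * (2^(n+1) * (C₁ * (2 * C₂)) * η / δ^(n+1))) := by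
    nlinarith [norm_nonneg
      (mderiv (b₁, b₂) (fun x => (1 + F x) ^ ((1:ℂ)/2) - (1 + F₀ x) ^ ((1:ℂ)/2)) κ)]
  calc ‖mderiv (b₁, b₂) (fun x => (1 + F x) ^ ((1:ℂ)/2) - (1 + F₀ x) ^ ((1:ℂ)/2)) κ‖
      ≤ 2 * (η / δ^(n+1) + ((n+2) * (n+2) : ℝ) * (2^(n+1) * (C₁ * (2 * C₂)) * η / δ^(n+1))) := hXb
    _ = (2 + ((n+2)*(n+2)) * 2^(n+3) * (C₁*C₂)) * η / δ ^ (n + 1) := by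
        field_simp
        ring

end Main2
section Main3

lemma div_mono_num {a b c : ℝ} (h : a ≤ b) (hc : 0 < c) : a / c ≤ b / c :=
  (div_le_div_iff_of_pos_right hc).mpr h

lemma gb_step (βmax : ℕ) (A : ℝ) (hA : 0 < A) (n : ℕ) (hn : n + 1 ≤ βmax)
    {C₁ : ℝ} (hC₁ : 0 < C₁) (ih : GB βmax A n C₁) :
    ∃ C : ℝ, 0 < C ∧ GB βmax A (n + 1) C := by
  set Ca := 2*A + 2*((n+2)*(n+2)) * 2^(n+1) * (C₁*C₁) with hCa
  set C₂ := C₁ + Ca with hC₂def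
  set Cb := 2 + ((n+2)*(n+2)) * 2^(n+3) * (C₁*C₂) with hCb
  have hpos1 : (0:ℝ) < 2*((n+2)*(n+2)) * 2^(n+1) * (C₁*C₁) := by positivity
  have hCa0 : 0 < Ca := by
    rw [hCa]
    linarith
  have hC₂0 : 0 < C₂ := by
    rw [hC₂def]
    linarith
  have hpos2 : (0:ℝ) < ((n+2)*(n+2)) * 2^(n+3) * (C₁*C₂) := by positivity
  have hCb0 : 0 < Cb := by
    rw [hCb]
    linarith
  refine ⟨C₂ + Cb, by linarith, ?_⟩
  intro U hU δ η hδ hη F F₀ hF hF₀ hFb hF₀b hmF hmF₀ hmD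
  have ihall := ih U hU δ η hδ hη F F₀ hF hF₀ hFb hF₀b hmF hmF₀ hmD
  have hSfull : ∀ κ ∈ U, ∀ β : ℕ × ℕ, β.1 + β.2 ≤ n + 1 →
      ‖mderiv β (fun x => (1 + F x) ^ ((1:ℂ)/2)) κ‖ ≤ C₂ / δ ^ (β.1 + β.2) := by
    intro κ hκ β hβ
    have hδp : (0:ℝ) < δ ^ (β.1 + β.2) := pow_pos hδ _
    rcases le_or_gt (β.1 + β.2) n with h | h
    · exact ((ihall κ hκ β h).1).trans (div_mono_num (by linarith) hδp)
    · have hb : β.1 + β.2 = n + 1 := by omega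
      obtain ⟨b₁, b₂⟩ := β
      have htop := sqrt_top_bound βmax A hU hδ hF hFb hn hmF hC₁
        (fun κ' hκ' β' hβ' => (ihall κ' hκ' β' hβ').1) hκ hb
      rw [← hCa] at htop
      show ‖mderiv (b₁, b₂) (fun x => (1 + F x) ^ ((1:ℂ)/2)) κ‖ ≤ C₂ / δ ^ (b₁ + b₂)
      rw [(show b₁ + b₂ = n + 1 from hb)]
      exact htop.trans (div_mono_num (by linarith) (pow_pos hδ _))
  have hS₀full : ∀ κ ∈ U, ∀ β : ℕ × ℕ, β.1 + β.2 ≤ n + 1 →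
      ‖mderiv β (fun x => (1 + F₀ x) ^ ((1:ℂ)/2)) κ‖ ≤ C₂ / δ ^ (β.1 + β.2) := by
    intro κ hκ β hβ
    have hδp : (0:ℝ) < δ ^ (β.1 + β.2) := pow_pos hδ _
    rcases le_or_gt (β.1 + β.2) n with h | h
    · exact ((ihall κ hκ β h).2.1).trans (div_mono_num (by linarith) hδp)
    · have hb : β.1 + β.2 = n + 1 := by omega
      obtain ⟨b₁, b₂⟩ := β
      have htop := sqrt_top_bound βmax A hU hδ hF₀ hF₀b hn hmF₀ hC₁
        (fun κ' hκ' β' hβ' => (ihall κ' hκ' β' hβ').2.1) hκ hb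
      rw [← hCa] at htop
      show ‖mderiv (b₁, b₂) (fun x => (1 + F₀ x) ^ ((1:ℂ)/2)) κ‖ ≤ C₂ / δ ^ (b₁ + b₂)
      rw [(show b₁ + b₂ = n + 1 from hb)]
      exact htop.trans (div_mono_num (by linarith) (pow_pos hδ _))
  intro κ hκ β hβ
  have hδp : (0:ℝ) < δ ^ (β.1 + β.2) := pow_pos hδ _
  rcases le_or_gt (β.1 + β.2) n with h | h
  · obtain ⟨e1, e2, e3⟩ := ihall κ hκ β h
    refine ⟨e1.trans (div_mono_num (by linarith) hδp),
      e2.trans (div_mono_num (by linarith) hδp),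
      e3.trans (div_mono_num ?_ hδp)⟩
    have : C₁ ≤ C₂ + Cb := by linarith
    exact mul_le_mul_of_nonneg_right this (le_of_lt hη)
  · have hb : β.1 + β.2 = n + 1 := by omega
    refine ⟨hSfull κ hκ β (by omega) |>.trans (div_mono_num (by linarith) hδp),
      hS₀full κ hκ β (by omega) |>.trans (div_mono_num (by linarith) hδp), ?_⟩
    obtain ⟨b₁, b₂⟩ := β
    have htop := sqrt_diff_top_bound βmax hU hδ hη hF hF₀ hFb hF₀b hn hmD hC₁ hC₂0
      hSfull hS₀full (fun κ' hκ' β' hβ' => (ihall κ' hκ' β' hβ').2.2) hκ hb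
    rw [← hCb] at htop
    show ‖mderiv (b₁, b₂) (fun x => (1 + F x) ^ ((1:ℂ)/2) - (1 + F₀ x) ^ ((1:ℂ)/2)) κ‖
      ≤ (C₂ + Cb) * η / δ ^ (b₁ + b₂)
    rw [(show b₁ + b₂ = n + 1 from hb)]
    refine htop.trans (div_mono_num ?_ (pow_pos hδ _))
    have : Cb ≤ C₂ + Cb := by linarith
    exact mul_le_mul_of_nonneg_right this (le_of_lt hη)

end Main3

/-- (Bookkeeping Lemma.)  Stability of the principal square root
`(1 + F)^{1/2}` under multi-index derivative bounds. -/
theorem statement18 (βmax : ℕ) (hβ : 0 < βmax) (A : ℝ) (hA : 0 < A) :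
    ∃ C : ℝ, 0 < C ∧
      ∀ U : Set V2, IsOpen U → ∀ δ η : ℝ, 0 < δ → 0 < η →
      ∀ F F₀ : V2 → ℂ, ContDiffOn ℝ βmax F U → ContDiffOn ℝ βmax F₀ U →
      (∀ κ ∈ U, ‖F κ‖ ≤ 1/10) → (∀ κ ∈ U, ‖F₀ κ‖ ≤ 1/10) →
      (∀ κ ∈ U, ∀ β : ℕ × ℕ, β.1 + β.2 ≤ βmax →
        ‖mderiv β F κ‖ ≤ A / δ ^ (β.1 + β.2)) →
      (∀ κ ∈ U, ∀ β : ℕ × ℕ, β.1 + β.2 ≤ βmax →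
        ‖mderiv β F₀ κ‖ ≤ A / δ ^ (β.1 + β.2)) →
      (∀ κ ∈ U, ∀ β : ℕ × ℕ, β.1 + β.2 ≤ βmax →
        ‖mderiv β (fun x => F x - F₀ x) κ‖ ≤ η / δ ^ (β.1 + β.2)) →
      ∀ κ ∈ U, ∀ β : ℕ × ℕ, β.1 + β.2 ≤ βmax →
        ‖mderiv β (fun x => (1 + F x) ^ ((1 : ℂ)/2) - (1 + F₀ x) ^ ((1 : ℂ)/2)) κ‖ ≤
          C * η / δ ^ (β.1 + β.2) := by
  have key : ∀ n : ℕ, n ≤ βmax → ∃ C : ℝ, 0 < C ∧ GB βmax A n C := by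
    intro n
    induction n with
    | zero => exact fun _ => ⟨2, by norm_num, gb_zero βmax A⟩
    | succ n ihn =>
      intro h
      obtain ⟨C₁, hC₁, hGB⟩ := ihn (by omega)
      exact gb_step βmax A hA n h hC₁ hGB
  obtain ⟨C, hC, hGB⟩ := key βmax le_rfl
  refine ⟨C, hC, ?_⟩
  intro U hU δ η hδ hη F F₀ hF hF₀ h1 h2 h3 h4 h5 κ hκ β hβ
  exact (hGB U hU δ η hδ hη F F₀ hF hF₀ h1 h2 h3 h4 h5 κ hκ β hβ).2.2
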